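/- If f is an orientation-preserving homeomorphism of [0,1] satisfying property P_ε for arbitrarily small ε > 0, then the fixed point set of f has no isolated points (and is totally disconnected, hence a Cantor set). -/

import Mathlib

open Set Filter Topology

noncomputable section

/-- The space `H⁺([0,1])` of increasing (orientation-preserving) homeomorphisms of `[0,1]`,
identified with the order isomorphisms of the unit interval. -/
abbrev HI := unitInterval ≃o unitInterval

/-- `(a,b)` is an r-interval of `f`: a connected component of `[0,1] \ Fix f`
on which all forward orbits converge to the right endpoint `b`. -/
def IsRInt (f : HI) (a b : unitInterval) : Prop :=
  a < b ∧ f a = a ∧ f b = b ∧ (∀ x ∈ Set.Ioo a b, f x ≠ x) ∧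
    ∀ x ∈ Set.Ioo a b, Tendsto (fun n => (⇑f)^[n] x) atTop (nhds b)

/-- `(a,b)` is an l-interval of `f`: a connected component of `[0,1] \ Fix f`
on which all forward orbits converge to the left endpoint `a`. -/
def IsLInt (f : HI) (a b : unitInterval) : Prop :=
  a < b ∧ f a = a ∧ f b = b ∧ (∀ x ∈ Set.Ioo a b, f x ≠ x) ∧
    ∀ x ∈ Set.Ioo a b, Tendsto (fun n => (⇑f)^[n] x) atTop (nhds a)

/-- Property `P_ε`: there are wandering intervals `(a i, b i)`, `i = 0,…,n`, ordered in `(0,1)`,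
alternately r-intervals (even index) and l-intervals (odd index), with all gaps smaller
than `ε`. -/
def PProp (f : HI) (ε : ℝ) : Prop :=
  ∃ (n : ℕ) (a b : Fin (n + 1) → unitInterval),
    0 < a 0 ∧
    (∀ i, a i < b i) ∧
    (∀ i : Fin n, b i.castSucc < a i.succ) ∧
    b (Fin.last n) < 1 ∧
    (∀ i : Fin (n + 1), Even (i : ℕ) → IsRInt f (a i) (b i)) ∧
    (∀ i : Fin (n + 1), ¬ Even (i : ℕ) → IsLInt f (a i) (b i)) ∧
    (a 0 : ℝ) < ε ∧ 1 - (b (Fin.last n) : ℝ) < ε ∧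
    ∀ i : Fin n, (a i.succ : ℝ) - (b i.castSucc : ℝ) < ε

/-- The `C⁰` distance on `H⁺([0,1])`. -/
def dC0 (f g : HI) : ℝ :=
  ⨆ x : unitInterval, max (dist (f x) (g x)) (dist (f.symm x) (g.symm x))

/-- Any increasing homeomorphism of `[0,1]` fixes `0`. -/
lemma HI.map_zero' (f : HI) : f 0 = 0 := by
  obtain ⟨z, hz⟩ := f.surjective 0
  have h1 : f 0 ≤ f z := f.monotone z.2.1
  rw [hz] at h1
  exact le_antisymm h1 (f 0).2.1

/-- Any increasing homeomorphism of `[0,1]` fixes `1`. -/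
lemma HI.map_one' (f : HI) : f 1 = 1 := by
  obtain ⟨z, hz⟩ := f.surjective 1
  have h1 : f z ≤ f 1 := f.monotone z.2.2
  rw [hz] at h1
  exact le_antisymm (f 1).2.2 h1

/-- Classification: a point avoiding all the open intervals `(a i, b i)` lies in one of the
closed "gaps". -/
lemma classify' {n : ℕ} {a b : Fin (n+1) → unitInterval} (x : unitInterval)
    (hx : ∀ i, x ∉ Set.Ioo (a i) (b i)) :
    x ≤ a 0 ∨ b (Fin.last n) ≤ x ∨ ∃ i : Fin n, b i.castSucc ≤ x ∧ x ≤ a i.succ := by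
  by_cases hS : ∀ i, ¬ a i < x
  · exact Or.inl (not_lt.mp (hS 0))
  · push_neg at hS
    obtain ⟨S, hSne⟩ : ∃ S : Finset (Fin (n+1)), S = Finset.univ.filter (fun i => a i < x) :=
      ⟨_, rfl⟩
    have hne : S.Nonempty := by
      obtain ⟨i, hi⟩ := hS
      exact ⟨i, by simp [hSne, hi]⟩
    obtain ⟨i, hiS, hmax⟩ : ∃ i ∈ S, ∀ j ∈ S, j ≤ i :=
      ⟨S.max' hne, S.max'_mem hne, fun j hj => S.le_max' j hj⟩
    have hai : a i < x := by simpa [hSne] using hiS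
    have hbi : b i ≤ x := by
      by_contra hlt
      exact hx i ⟨hai, not_le.mp hlt⟩
    rcases eq_or_ne i (Fin.last n) with hlast | hlast
    · exact Or.inr (Or.inl (hlast ▸ hbi))
    · obtain ⟨i', hci⟩ := Fin.exists_castSucc_eq.mpr hlast
      refine Or.inr (Or.inr ⟨i', hci ▸ hbi, ?_⟩)
      by_contra hlt
      have hmem : i'.succ ∈ S := by simp [hSne, not_le.mp hlt]
      have hle := hmax _ hmem
      have : i < i'.succ := hci ▸ (Fin.castSucc_lt_succ : i'.castSucc < i'.succ)
      exact absurd (lt_of_lt_of_le this hle) (lt_irrefl _)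

/-- From `P_ε'`, every fixed point has another fixed point within distance `ε'`. -/
lemma key_dense (f : HI) {ε' : ℝ} (hp : PProp f ε') (x : unitInterval) (hx : f x = x) :
    ∃ y : unitInterval, (f y = y ∧ y ≠ x) ∧ dist x y < ε' := by
  obtain ⟨n, a, b, ha0, hab, hba, hbn, hR, hL, hε0, hε1, hεg⟩ := hp
  have hfix : ∀ i, f (a i) = a i ∧ f (b i) = b i := by
    intro i
    by_cases he : Even (i : ℕ)
    · obtain ⟨_, h1, h2, _⟩ := hR i he; exact ⟨h1, h2⟩
    · obtain ⟨_, h1, h2, _⟩ := hL i he; exact ⟨h1, h2⟩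
  have hnofix : ∀ i, ∀ z ∈ Set.Ioo (a i) (b i), f z ≠ z := by
    intro i
    by_cases he : Even (i : ℕ)
    · exact (hR i he).2.2.2.1
    · exact (hL i he).2.2.2.1
  have hxnot : ∀ i, x ∉ Set.Ioo (a i) (b i) := fun i hmem => hnofix i x hmem hx
  have hx0 : (0:ℝ) ≤ (x:ℝ) := x.2.1
  have hx1 : (x:ℝ) ≤ 1 := x.2.2
  rcases classify' x hxnot with hc | hc | ⟨i, hc1, hc2⟩
  · -- x ∈ [0, a 0]
    have hcr : (x:ℝ) ≤ (a 0 : ℝ) := hc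
    rcases eq_or_ne x (a 0) with hxa | hxa
    · refine ⟨0, ⟨HI.map_zero' f, ?_⟩, ?_⟩
      · intro h0; rw [← h0] at hxa; exact absurd (hxa ▸ ha0) (lt_irrefl _)
      · rw [Subtype.dist_eq, Real.dist_eq, abs_lt]
        have : (x:ℝ) = (a 0 : ℝ) := by exact_mod_cast congrArg Subtype.val hxa
        have h0 : ((0:unitInterval):ℝ) = 0 := rfl
        constructor <;> rw [h0] <;> linarith
    · refine ⟨a 0, ⟨(hfix 0).1, fun h => hxa h.symm⟩, ?_⟩
      rw [Subtype.dist_eq, Real.dist_eq, abs_lt]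
      have ha0r : (0:ℝ) < (a 0 : ℝ) := ha0
      constructor <;> linarith
  · -- x ∈ [b last, 1]
    have hcr : (b (Fin.last n) : ℝ) ≤ (x:ℝ) := hc
    have hbnr : (b (Fin.last n) : ℝ) < 1 := hbn
    rcases eq_or_ne x (b (Fin.last n)) with hxb | hxb
    · refine ⟨1, ⟨HI.map_one' f, ?_⟩, ?_⟩
      · intro h1; rw [← h1] at hxb
        have : (1:ℝ) = (b (Fin.last n) : ℝ) := by exact_mod_cast congrArg Subtype.val hxb
        linarith
      · rw [Subtype.dist_eq, Real.dist_eq, abs_lt]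
        have : (x:ℝ) = (b (Fin.last n) : ℝ) := by exact_mod_cast congrArg Subtype.val hxb
        have h1 : ((1:unitInterval):ℝ) = 1 := rfl
        constructor <;> rw [h1] <;> linarith
    · refine ⟨b (Fin.last n), ⟨(hfix _).2, fun h => hxb h.symm⟩, ?_⟩
      rw [Subtype.dist_eq, Real.dist_eq, abs_lt]
      constructor <;> linarith
  · -- x ∈ [b i.castSucc, a i.succ]
    have hc1r : (b i.castSucc : ℝ) ≤ (x:ℝ) := hc1
    have hc2r : (x:ℝ) ≤ (a i.succ : ℝ) := hc2
    have hgap : (a i.succ : ℝ) - (b i.castSucc : ℝ) < ε' := hεg i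
    have hlt : (b i.castSucc : ℝ) < (a i.succ : ℝ) := hba i
    rcases eq_or_ne x (b i.castSucc) with hxb | hxb
    · refine ⟨a i.succ, ⟨(hfix _).1, ?_⟩, ?_⟩
      · intro h1; rw [← h1] at hxb
        have : (a i.succ : ℝ) = (b i.castSucc : ℝ) := by exact_mod_cast congrArg Subtype.val hxb
        linarith
      · rw [Subtype.dist_eq, Real.dist_eq, abs_lt]
        constructor <;> linarith
    · refine ⟨b i.castSucc, ⟨(hfix _).2, fun h => hxb h.symm⟩, ?_⟩
      rw [Subtype.dist_eq, Real.dist_eq, abs_lt]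
      constructor <;> linarith

/-- From `P_ε'`, there is no interval of fixed points of length `≥ ε'`. -/
lemma key_gap (f : HI) {ε' : ℝ} (hp : PProp f ε') (u v : unitInterval)
    (huv : u < v) (hfixall : ∀ w ∈ Set.Icc u v, f w = w) : (v:ℝ) - (u:ℝ) < ε' := by
  obtain ⟨n, a, b, ha0, hab, hba, hbn, hR, hL, hε0, hε1, hεg⟩ := hp
  have hnofix : ∀ i, ∀ z ∈ Set.Ioo (a i) (b i), f z ≠ z := by
    intro i
    by_cases he : Even (i : ℕ)
    · exact (hR i he).2.2.2.1
    · exact (hL i he).2.2.2.1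
  have haM : StrictMono a := Fin.strictMono_iff_lt_succ.mpr fun i => (hab _).trans (hba i)
  have hbM : StrictMono b := Fin.strictMono_iff_lt_succ.mpr fun i => (hba i).trans (hab _)
  -- no interval (a i, b i) can sit inside [u, v]
  have hmid : ∀ i : Fin (n+1), u ≤ a i → b i ≤ v → False := by
    intro i h1 h2
    have habr : (a i : ℝ) < (b i : ℝ) := hab i
    set m : ℝ := ((a i : ℝ) + (b i : ℝ)) / 2 with hm
    have hm0 : (0:ℝ) ≤ m := by have := (a i).2.1; have := (b i).2.1; simp [hm]; linarith
    have hm1 : m ≤ 1 := by have := (a i).2.2; have := (b i).2.2; simp [hm]; linarith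
    set z : unitInterval := ⟨m, hm0, hm1⟩ with hz
    have hz1 : a i < z := by
      rw [← Subtype.coe_lt_coe]; show (a i : ℝ) < m; rw [hm]; linarith
    have hz2 : z < b i := by
      rw [← Subtype.coe_lt_coe]; show m < (b i : ℝ); rw [hm]; linarith
    have hzf : f z = z :=
      hfixall z ⟨h1.trans hz1.le, hz2.le.trans h2⟩
    exact hnofix i z ⟨hz1, hz2⟩ hzf
  have hu : f u = u := hfixall u ⟨le_refl u, huv.le⟩
  have hv : f v = v := hfixall v ⟨huv.le, le_refl v⟩
  have hunot : ∀ i, u ∉ Set.Ioo (a i) (b i) := fun i hmem => hnofix i u hmem hu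
  have hvnot : ∀ i, v ∉ Set.Ioo (a i) (b i) := fun i hmem => hnofix i v hmem hv
  have hu0 : (0:ℝ) ≤ (u:ℝ) := u.2.1
  have hv1 : (v:ℝ) ≤ 1 := v.2.2
  have huvr : (u:ℝ) ≤ (v:ℝ) := Subtype.coe_le_coe.mpr huv.le
  rcases classify' u hunot with hcu | hcu | ⟨i, hcu1, hcu2⟩ <;>
    rcases classify' v hvnot with hcv | hcv | ⟨j, hcv1, hcv2⟩
  · -- u, v ≤ a 0
    have h1 : (v:ℝ) ≤ (a 0 : ℝ) := hcv
    have h2 : (a 0 : ℝ) < ε' := hε0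
    linarith
  · -- u ≤ a 0, b last ≤ v
    exact absurd (hmid 0 hcu ((hbM.monotone (Fin.zero_le _)).trans hcv)) not_false
  · -- u ≤ a 0, v in gap j
    exact absurd (hmid 0 hcu ((hbM.monotone (Fin.zero_le _)).trans hcv1)) not_false
  · -- b last ≤ u, v ≤ a 0
    have h1 : a 0 ≤ a (Fin.last n) := haM.monotone (Fin.zero_le _)
    have h2 : a (Fin.last n) < b (Fin.last n) := hab _
    exact absurd ((h1.trans_lt h2).trans_le (hcu.trans (huv.le.trans hcv))) (lt_irrefl _)
  · -- b last ≤ u, b last ≤ v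
    have h1 : (b (Fin.last n) : ℝ) ≤ (u:ℝ) := hcu
    linarith
  · -- b last ≤ u, v in gap j
    have h1 : a j.succ ≤ a (Fin.last n) := haM.monotone (Fin.le_last _)
    have h2 : a (Fin.last n) < b (Fin.last n) := hab _
    exact absurd ((h1.trans_lt h2).trans_le (hcu.trans (huv.le.trans hcv2)))
      (lt_irrefl _)
  · -- u in gap i, v ≤ a 0
    have h1 : a 0 ≤ a i.castSucc := haM.monotone (Fin.zero_le _)
    have h2 : a i.castSucc < b i.castSucc := hab _
    exact absurd ((h1.trans_lt h2).trans_le (hcu1.trans (huv.le.trans hcv))) (lt_irrefl _)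
  · -- u in gap i, b last ≤ v
    exact absurd (hmid i.succ hcu2 ((hbM.monotone (Fin.le_last _)).trans hcv)) not_false
  · -- u in gap i, v in gap j
    rcases lt_trichotomy i j with hij | hij | hij
    · have hle : i.succ ≤ j.castSucc := by
        rw [Fin.le_def]
        simp only [Fin.val_succ, Fin.coe_castSucc]
        exact hij
      exact absurd (hmid i.succ hcu2 ((hbM.monotone hle).trans hcv1)) not_false
    · subst hij
      have h1 : (b i.castSucc : ℝ) ≤ (u:ℝ) := hcu1
      have h2 : (v:ℝ) ≤ (a i.succ : ℝ) := hcv2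
      have h3 : (a i.succ : ℝ) - (b i.castSucc : ℝ) < ε' := hεg i
      linarith
    · have hle : j.succ ≤ i.castSucc := by
        rw [Fin.le_def]
        simp only [Fin.val_succ, Fin.coe_castSucc]
        exact hij
      have h1 : a j.succ ≤ a i.castSucc := haM.monotone hle
      have h2 : a i.castSucc < b i.castSucc := hab _
      exact absurd ((h1.trans_lt h2).trans_le (hcu1.trans (huv.le.trans hcv2))) (lt_irrefl _)

/-- if `f ∈ H⁺([0,1])` satisfies `P_ε` for arbitrarily small `ε > 0`, then
`Fix f` has no isolated points and is totally disconnected (hence a Cantor set). -/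
theorem stmt_2 (f : HI) (h : ∀ ε : ℝ, 0 < ε → ∃ ε' : ℝ, 0 < ε' ∧ ε' ≤ ε ∧ PProp f ε') :
    (∀ x : unitInterval, f x = x → x ∈ closure {y : unitInterval | f y = y ∧ y ≠ x}) ∧
      IsTotallyDisconnected {x : unitInterval | f x = x} := by
  constructor
  · intro x hx
    rw [Metric.mem_closure_iff]
    intro ε hε
    obtain ⟨ε', hε'0, hε'le, hp⟩ := h ε hε
    obtain ⟨y, hy, hd⟩ := key_dense f hp x hx
    exact ⟨y, hy, lt_of_lt_of_le hd hε'le⟩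
  · intro t hts htp
    have H : ∀ u v : unitInterval, u ∈ t → v ∈ t → u < v → False := by
      intro u v hu hv huv
      have hoc : t.OrdConnected := htp.ordConnected
      have hfixall : ∀ w ∈ Set.Icc u v, f w = w := fun w hw => hts (hoc.out hu hv hw)
      have hpos : (0:ℝ) < (v:ℝ) - (u:ℝ) := by
        have : (u:ℝ) < (v:ℝ) := Subtype.coe_lt_coe.mpr huv
        linarith
      obtain ⟨ε', hε'0, hε'le, hp⟩ := h _ hpos
      have := key_gap f hp u v huv hfixall
      linarith
    intro u hu v hv
    rcases lt_trichotomy u v with huv | huv | huv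
    · exact absurd (H u v hu hv huv) not_false
    · exact huv
    · exact absurd (H v u hv hu huv) not_false
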